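/- arXiv:2404.07134 — 2 statements merged into one kernel-verified Lean document; each statement's English description precedes it below -/
import Mathlib

section
/- For the SA-branch function G(Ψ) = Ψ² − η₃Ψ + η₁(η₃−Ψ)/(1−Ψ) with 0 < η₃ < 1 and η₁ > η₃/(1−η₃), G is strictly decreasing on (−∞, 0]; in particular, for every η₂ > η₁η₃ there exists exactly one Ψ < 0 with G(Ψ) = η₂. -/
/-- For `0 < η₃ < 1` and `η₁ > η₃/(1−η₃)`, the SA branch function
`G(Ψ) = Ψ² − η₃Ψ + η₁(η₃−Ψ)/(1−Ψ)` is strictly decreasing on `(−∞, 0]`;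
in particular, for every `η₂ > η₁η₃` there is exactly one `Ψ < 0` with
`G Ψ = η₂`. -/
theorem stommel_SA_branch_monotone (η₁ η₃ : ℝ)
    (hη₃ : 0 < η₃) (hη₃' : η₃ < 1) (hη₁ : η₁ > η₃ / (1 - η₃))
    (G : ℝ → ℝ)
    (hG : G = fun Ψ => Ψ ^ 2 - η₃ * Ψ + η₁ * (η₃ - Ψ) / (1 - Ψ)) :
    StrictAntiOn G (Set.Iic 0) ∧
    ∀ η₂ : ℝ, η₁ * η₃ < η₂ → ∃! Ψ : ℝ, Ψ < 0 ∧ G Ψ = η₂ := by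
  have hη₁pos : 0 < η₁ := lt_trans (div_pos hη₃ (by linarith)) hη₁
  -- continuity on Iic 0
  have hcont : ContinuousOn G (Set.Iic 0) := by
    rw [hG]
    apply ContinuousOn.add
    · fun_prop
    · apply ContinuousOn.div
      · fun_prop
      · fun_prop
      · intro x hx
        simp only [Set.mem_Iic] at hx
        intro h; linarith [h]
  -- derivative
  have hderiv : ∀ Ψ : ℝ, Ψ < 0 →
      HasDerivAt G (2 * Ψ - η₃ + η₁ * (η₃ - 1) / (1 - Ψ) ^ 2) Ψ := by
    intro Ψ hΨ
    have hden : (1 : ℝ) - Ψ ≠ 0 := by intro h; linarith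
    have h1 : HasDerivAt (fun x : ℝ => x ^ 2 - η₃ * x) (2 * Ψ - η₃) Ψ := by
      have := ((hasDerivAt_pow 2 Ψ).sub ((hasDerivAt_id Ψ).const_mul η₃))
      simpa [Pi.sub_def] using this
    have h2 : HasDerivAt (fun x : ℝ => η₁ * (η₃ - x) / (1 - x))
        (η₁ * (η₃ - 1) / (1 - Ψ) ^ 2) Ψ := by
      have hnum : HasDerivAt (fun x : ℝ => η₁ * (η₃ - x)) (-η₁) Ψ := by
        have := ((hasDerivAt_id Ψ).const_sub η₃).const_mul η₁
        simpa using this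
      have hd : HasDerivAt (fun x : ℝ => 1 - x) (-1) Ψ := by
        simpa using (hasDerivAt_id Ψ).const_sub 1
      have := hnum.div hd hden
      refine this.congr_deriv ?_
      ring
    rw [hG]
    exact h1.add h2
  have hneg : ∀ Ψ : ℝ, Ψ < 0 → 2 * Ψ - η₃ + η₁ * (η₃ - 1) / (1 - Ψ) ^ 2 < 0 := by
    intro Ψ hΨ
    have h0 : (0:ℝ) < 1 - Ψ := by linarith
    have h1 : (0:ℝ) < (1 - Ψ) ^ 2 := by positivity
    have h2 : η₁ * (η₃ - 1) / (1 - Ψ) ^ 2 < 0 := by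
      apply div_neg_of_neg_of_pos _ h1
      nlinarith
    nlinarith
  have hanti : StrictAntiOn G (Set.Iic 0) := by
    apply StrictAntiOn.mono (s := Set.Iic (0:ℝ)) ?_ le_rfl
    apply strictAntiOn_of_deriv_neg (convex_Iic 0) hcont
    intro x hx
    rw [interior_Iic] at hx
    rw [(hderiv x hx).deriv]
    exact hneg x hx
  refine ⟨hanti, ?_⟩
  intro η₂ hη₂
  have hG0 : G 0 = η₁ * η₃ := by rw [hG]; norm_num
  set M : ℝ := -(|η₂| + 1) with hM
  have hMneg : M < 0 := by
    have := abs_nonneg η₂; simp [hM]; linarith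
  have hGM : η₂ ≤ G M := by
    have hden : (0:ℝ) < 1 - M := by linarith
    have hfrac : 0 ≤ η₁ * (η₃ - M) / (1 - M) := by
      apply div_nonneg _ hden.le
      nlinarith
    have hsq : η₂ ≤ M ^ 2 - η₃ * M := by
      have h1 : η₂ ≤ |η₂| := le_abs_self η₂
      have h2 : |η₂| + 1 ≤ (|η₂| + 1) ^ 2 := by nlinarith [abs_nonneg η₂]
      nlinarith [abs_nonneg η₂]
    rw [hG]; simp only; nlinarith [hfrac, hsq]
  have hG0lt : G 0 < η₂ := by rw [hG0]; exact hη₂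
  -- IVT on [M, 0]
  have hconts : ContinuousOn G (Set.Icc M 0) :=
    hcont.mono (Set.Icc_subset_Iic_self)
  obtain ⟨Ψ, hΨmem, hΨeq⟩ :=
    intermediate_value_Icc' hMneg.le hconts ⟨hG0lt.le, hGM⟩
  have hΨne : Ψ ≠ 0 := by
    intro h; rw [h] at hΨeq; exact absurd hΨeq hG0lt.ne
  have hΨlt : Ψ < 0 := lt_of_le_of_ne hΨmem.2 hΨne
  refine ⟨Ψ, ⟨hΨlt, hΨeq⟩, ?_⟩
  rintro y ⟨hy, hyeq⟩
  exact hanti.injOn (Set.mem_Iic.2 hy.le) (Set.mem_Iic.2 hΨlt.le) (hyeq.trans hΨeq.symm)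
end

section
/- Under the assumptions 0 < η₃ < 1, η₁ > η₃/(1−η₃), the function F(Ψ) = −Ψ² − η₃Ψ + η₁(η₃+Ψ)/(1+Ψ) on [0,∞) attains a strict local maximum at some Ψ* > 0; in particular there exist values of η₂ with F(0) < η₂ < F(Ψ*) such that the equation F(Ψ) = η₂ has at least two solutions Ψ ≥ 0 (bistability within the TH branch together with a saddle). -/
/-- Under `0 < η₃ < 1` and `η₁ > η₃/(1−η₃)`, the TH branch function
`F(Ψ) = −Ψ² − η₃Ψ + η₁(η₃+Ψ)/(1+Ψ)` attains on `[0,∞)` a strict local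
maximum at some `Ψ* > 0` with `F(Ψ*) > F(0)`; in particular there exist
values `η₂` with `F(0) < η₂ < F(Ψ*)` for which `F(Ψ) = η₂` has at least two
solutions `Ψ ≥ 0` (bistability within the TH branch together with a saddle). -/
theorem stommel_TH_bistability (η₁ η₃ : ℝ)
    (hη₃ : 0 < η₃) (hη₃' : η₃ < 1) (hη₁ : η₁ > η₃ / (1 - η₃))
    (F : ℝ → ℝ)
    (hF : F = fun Ψ => -Ψ ^ 2 - η₃ * Ψ + η₁ * (η₃ + Ψ) / (1 + Ψ)) :
    ∃ Ψstar : ℝ, 0 < Ψstar ∧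
      (∀ᶠ Ψ in nhds Ψstar, Ψ ≠ Ψstar → F Ψ < F Ψstar) ∧
      F 0 < F Ψstar ∧
      ∃ η₂ : ℝ, F 0 < η₂ ∧ η₂ < F Ψstar ∧
        ∃ Ψa Ψb : ℝ, 0 ≤ Ψa ∧ 0 ≤ Ψb ∧ Ψa ≠ Ψb ∧ F Ψa = η₂ ∧ F Ψb = η₂ := by
  have h1η₃ : (0:ℝ) < 1 - η₃ := by linarith
  have hd : 0 < η₁ * (1 - η₃) - η₃ := by
    rw [gt_iff_lt, div_lt_iff₀ h1η₃] at hη₁; linarith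
  set d : ℝ := η₁ * (1 - η₃) - η₃ with hdd
  have hη₁pos : 0 < η₁ := lt_trans (div_pos hη₃ h1η₃) hη₁
  set M : ℝ := η₁ + 1 with hM
  have hMpos : (0:ℝ) < M := by positivity
  -- continuity
  have hcont : ContinuousOn F (Set.Ici (0:ℝ)) := by
    rw [hF]
    refine ContinuousOn.add (by fun_prop) (ContinuousOn.div (by fun_prop) (by fun_prop) ?_)
    intro x hx
    simp only [Set.mem_Ici] at hx
    intro h; linarith
  have hcontIcc : ∀ a b : ℝ, 0 ≤ a → ContinuousOn F (Set.Icc a b) := by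
    intro a b ha
    exact hcont.mono (fun x hx => le_trans ha hx.1)
  -- max on [0, M]
  obtain ⟨u, hu, hmax⟩ := isCompact_Icc.exists_isMaxOn (Set.nonempty_Icc.2 hMpos.le)
    (hcontIcc 0 M le_rfl)
  have e0 : F 0 = η₁ * η₃ := by rw [hF]; norm_num
  -- F ε > F 0 for a suitable small ε
  set ε : ℝ := min 1 (d / (2 * (2 + η₃))) with hε
  have hε0 : 0 < ε := lt_min one_pos (div_pos hd (by linarith))
  have hε1 : ε ≤ 1 := min_le_left _ _
  have hε2 : ε * (2 * (2 + η₃)) ≤ d := by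
    have := min_le_right 1 (d / (2 * (2 + η₃)))
    rwa [le_div_iff₀ (by linarith : (0:ℝ) < 2 * (2 + η₃))] at this
  have hFε : F 0 < F ε := by
    have h1ε : (0:ℝ) < 1 + ε := by linarith
    have key : F ε - F 0 = ε * (d - ε * (1 + η₃ + ε)) / (1 + ε) := by
      rw [hF, hdd]; field_simp; ring
    have hsq : ε * ε ≤ ε * 1 := mul_le_mul_of_nonneg_left hε1 hε0.le
    have hpos : 0 < ε * (d - ε * (1 + η₃ + ε)) / (1 + ε) := by
      apply div_pos _ h1ε
      apply mul_pos hε0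
      nlinarith
    linarith [key, hpos]
  have hεM : ε ≤ M := le_trans hε1 (by rw [hM]; linarith)
  have F0lt : F 0 < F u := lt_of_lt_of_le hFε (hmax ⟨hε0.le, hεM⟩)
  have hupos : 0 < u := by
    rcases lt_or_eq_of_le hu.1 with h | h
    · exact h
    · exact absurd F0lt (by rw [← h]; exact lt_irrefl _)
  -- F M < F 0
  have hFM : F M < F 0 := by
    have h1M : (0:ℝ) < 1 + M := by linarith
    have hdiv : η₁ * (η₃ + M) / (1 + M) ≤ η₁ := by
      rw [div_le_iff₀ h1M]; nlinarith
    have : F M = -M ^ 2 - η₃ * M + η₁ * (η₃ + M) / (1 + M) := by rw [hF]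
    rw [this, e0]; nlinarith
  have huM : u < M := by
    rcases lt_or_eq_of_le hu.2 with h | h
    · exact h
    · exfalso; rw [h] at F0lt; linarith
  have h1u : (0:ℝ) < 1 + u := by linarith
  -- strict local max via analyticity
  have hA : AnalyticAt ℝ (fun Ψ => F Ψ - F u) u := by
    rw [hF]
    apply AnalyticAt.sub _ analyticAt_const
    exact ((((analyticAt_id).pow 2).neg.sub (analyticAt_const.mul analyticAt_id)).add
      ((analyticAt_const.mul (analyticAt_const.add analyticAt_id)).div
        (analyticAt_const.add analyticAt_id) h1u.ne'))
  have hstrict : ∀ᶠ Ψ in nhds u, Ψ ≠ u → F Ψ < F u := by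
    rcases hA.eventually_eq_zero_or_eventually_ne_zero with h | h
    · -- rule out: F locally constant
      exfalso
      rw [Metric.eventually_nhds_iff] at h
      obtain ⟨δ, hδ, hball⟩ := h
      have key : ∀ x : ℝ, 0 < x → F (u + x) = F u →
          (u + x + u + η₃) * (1 + (u + x)) * (1 + u) = η₁ * (1 - η₃) := by
        intro x hx hFx
        have h1x : (0:ℝ) < 1 + (u + x) := by linarith
        have e := hFx
        rw [hF] at e
        simp only at e
        field_simp at e
        have hz : x * ((u + x + u + η₃) * (1 + (u + x)) * (1 + u) - η₁ * (1 - η₃)) = 0 := by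
          linear_combination -e
        rcases mul_eq_zero.mp hz with h' | h'
        · exact absurd h' hx.ne'
        · linarith [sub_eq_zero.mp h']
      have ha : F (u + δ/2) = F u := by
        have := hball (y := u + δ/2) (by rw [Real.dist_eq]; rw [abs_of_pos] <;> [skip; linarith] ; linarith)
        linarith [sub_eq_zero.mp this]
      have hb : F (u + δ/3) = F u := by
        have := hball (y := u + δ/3) (by rw [Real.dist_eq]; rw [abs_of_pos] <;> [skip; linarith] ; linarith)
        linarith [sub_eq_zero.mp this]
      have eA := key (δ/2) (by linarith) ha
      have eB := key (δ/3) (by linarith) hb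
      nlinarith [eA, eB, hδ, hupos, h1u, mul_pos h1u hδ, sq_nonneg δ, sq_nonneg u,
        mul_pos hupos hδ]
    · rw [eventually_nhdsWithin_iff] at h
      have hIoo : ∀ᶠ Ψ in nhds u, Ψ ∈ Set.Ioo 0 M :=
        (isOpen_Ioo.mem_nhds ⟨hupos, huM⟩)
      filter_upwards [h, hIoo] with Ψ h1 h2 hne
      have hle : F Ψ ≤ F u := hmax ⟨h2.1.le, h2.2.le⟩
      have : F Ψ - F u ≠ 0 := h1 (by simpa using hne)
      rcases lt_or_eq_of_le hle with h' | h'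
      · exact h'
      · exact absurd (by rw [h']; ring) this
  refine ⟨u, hupos, hstrict, F0lt, (F 0 + F u) / 2, by linarith, by linarith, ?_⟩
  -- two preimages via IVT
  obtain ⟨Ψa, hΨa, hFa⟩ := intermediate_value_Icc hu.1 (hcontIcc 0 u le_rfl)
    (show (F 0 + F u) / 2 ∈ Set.Icc (F 0) (F u) from ⟨by linarith, by linarith⟩)
  obtain ⟨Ψb, hΨb, hFb⟩ := intermediate_value_Icc' hu.2 (hcontIcc u M hupos.le)
    (show (F 0 + F u) / 2 ∈ Set.Icc (F M) (F u) from ⟨by linarith, by linarith⟩)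
  refine ⟨Ψa, Ψb, hΨa.1, le_trans hupos.le hΨb.1, ?_, hFa, hFb⟩
  intro hab
  have hane : Ψa ≠ u := by intro h; rw [h] at hFa; linarith
  have hbne : Ψb ≠ u := by intro h; rw [h] at hFb; linarith
  have : Ψa < u := lt_of_le_of_ne hΨa.2 hane
  have : u < Ψb := lt_of_le_of_ne hΨb.1 (Ne.symm hbne)
  linarith
end
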